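/- Let r and s be primes and v, w positive integers with r^v + 1 = s^w. Then one of the following holds: (i) (r,s,v,w) = (2,3,3,2); (ii) r = 2, w = 1 and s = 2^v + 1; (iii) s = 2, v = 1 and r = 2^w - 1. -/
import Mathlib

open Finset

/-- An odd divisor of a power of two equals one. -/
lemma odd_dvd_two_pow_aux {t n : ℕ} (ht : Odd t) (h : t ∣ 2 ^ n) : t = 1 :=
  ((Nat.coprime_two_right.mpr ht).pow_right n).eq_one_of_dvd h

/-- Sum of an odd number of odd integers is odd. -/
lemma odd_sum_aux (x : ℤ) (n : ℕ) (hx : Odd x) (hn : Odd n) :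
    Odd (∑ i ∈ range n, x ^ i) := by
  rw [Int.odd_iff, Finset.sum_int_mod]
  have : ∀ i ∈ range n, x ^ i % 2 = 1 := fun i _ => Int.odd_iff.mp (hx.pow)
  rw [Finset.sum_congr rfl this, Finset.sum_const, card_range, nsmul_eq_mul, mul_one]
  exact_mod_cast Nat.odd_iff.mp hn

theorem stmt_0 (r s v w : ℕ) (hr : r.Prime) (hs : s.Prime)
    (hv : 0 < v) (hw : 0 < w) (h : r ^ v + 1 = s ^ w) :
    (r = 2 ∧ s = 3 ∧ v = 3 ∧ w = 2) ∨
    (r = 2 ∧ w = 1 ∧ s = 2 ^ v + 1) ∨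
    (s = 2 ∧ v = 1 ∧ r = 2 ^ w - 1) := by
  by_cases hr2 : r = 2
  · -- r = 2
    subst hr2
    have hs2 : s ≠ 2 := by
      rintro rfl
      have h2v : 2 ∣ 2 ^ v := dvd_pow_self 2 hv.ne'
      have h2w : 2 ∣ 2 ^ w := dvd_pow_self 2 hw.ne'
      omega
    have hsodd : Odd s := hs.odd_of_ne_two hs2
    rcases Nat.even_or_odd w with hwe | hwo
    · -- w even : case (i)
      left
      obtain ⟨m, rfl⟩ := hwe
      have hm : 0 < m := by omega
      have hsm : 3 ≤ s ^ m := by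
        calc 3 ≤ s := by have := hs.two_le; omega
        _ ≤ s ^ m := Nat.le_self_pow hm.ne' s
      obtain ⟨y, hy⟩ : ∃ y, s ^ m = y + 1 := ⟨s ^ m - 1, by omega⟩
      have hsq : s ^ (m + m) = (y + 1) * (y + 1) := by rw [pow_add, hy]
      rw [hsq] at h
      have key : y * (y + 2) = 2 ^ v := by nlinarith [h]
      have hyodd : Even y := by
        have : Odd (s ^ m) := hsodd.pow
        rw [hy, Nat.odd_iff] at this; rw [Nat.even_iff]; omega
      have hy2 : 2 ≤ y := by omega
      obtain ⟨a, ha, hae⟩ := (Nat.dvd_prime_pow Nat.prime_two).mp (⟨y + 2, key.symm⟩ : y ∣ 2 ^ v)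
      obtain ⟨b, hb, hbe⟩ := (Nat.dvd_prime_pow Nat.prime_two).mp
        (⟨y, by rw [← key]; ring⟩ : (y + 2) ∣ 2 ^ v)
      have ha1 : 1 ≤ a := by
        rcases a with _ | a
        · simp at hae; omega
        · omega
      have ha2 : a = 1 := by
        by_contra hne
        have ha2' : 2 ≤ a := by omega
        have h4a : 4 ∣ 2 ^ a := by
          have : (2:ℕ) ^ 2 ∣ 2 ^ a := pow_dvd_pow 2 ha2'
          simpa using this
        have hb2 : 2 ≤ b := by
          by_contra hb2
          have : (2:ℕ) ^ b ≤ 2 ^ 1 := Nat.pow_le_pow_right (by norm_num) (by omega)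
          norm_num at this
          omega
        have h4b : 4 ∣ 2 ^ b := by
          have : (2:ℕ) ^ 2 ∣ 2 ^ b := pow_dvd_pow 2 hb2
          simpa using this
        omega
      subst ha2
      norm_num at hae
      subst hae
      have hsm3 : s ^ m = 3 := by omega
      have hs3 : s = 3 := by
        have : s ∣ 3 := hsm3 ▸ dvd_pow_self s hm.ne'
        exact (Nat.prime_dvd_prime_iff_eq hs Nat.prime_three).mp this
      have hm1 : m = 1 := by
        subst hs3
        have : (3:ℕ) ^ m = 3 ^ 1 := by omega
        exact Nat.pow_right_injective (by norm_num) this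
      have hv3 : v = 3 := by
        norm_num at h
        have : (2:ℕ) ^ v = 2 ^ 3 := by norm_num; omega
        exact Nat.pow_right_injective (by norm_num) this
      exact ⟨rfl, hs3, hv3, by omega⟩
    · -- w odd : must have w = 1, case (ii)
      right; left
      have hw1 : w = 1 := by
        by_contra hw1
        have hw2 : 2 ≤ w := by omega
        set T : ℕ := ∑ i ∈ range w, s ^ i with hT
        have hgeom : (T : ℤ) * ((s : ℤ) - 1) = (s : ℤ) ^ w - 1 := by
          push_cast [hT]
          exact geom_sum_mul _ _
        have h' : (2:ℤ) ^ v + 1 = (s:ℤ) ^ w := by exact_mod_cast h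
        have hdvd : (T : ℤ) ∣ (2 : ℤ) ^ v := ⟨(s : ℤ) - 1, by linarith [hgeom]⟩
        have hdvdn : T ∣ 2 ^ v := by exact_mod_cast hdvd
        have hTodd : Odd T := by
          rw [Nat.odd_iff, hT, Finset.sum_nat_mod]
          have : ∀ i ∈ range w, s ^ i % 2 = 1 := fun i _ => Nat.odd_iff.mp hsodd.pow
          rw [Finset.sum_congr rfl this, Finset.sum_const, card_range, smul_eq_mul, mul_one]
          exact Nat.odd_iff.mp hwo
        have hT1 : T = 1 := odd_dvd_two_pow_aux hTodd hdvdn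
        have hTge : 1 + s ≤ T := by
          rw [hT]
          calc 1 + s = s ^ 0 + s ^ 1 := by ring
          _ = ∑ i ∈ ({0, 1} : Finset ℕ), s ^ i := by simp
          _ ≤ ∑ i ∈ range w, s ^ i := by
            refine Finset.sum_le_sum_of_subset ?_
            intro i hi
            simp only [Finset.mem_insert, Finset.mem_singleton] at hi
            rcases hi with rfl | rfl <;> simp [Finset.mem_range] <;> omega
        have := hs.two_le
        omega
      refine ⟨rfl, hw1, ?_⟩
      subst hw1; simpa using h.symm
  · -- r odd, so s = 2
    right; right
    have hrodd : Odd r := hr.odd_of_ne_two hr2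
    have hs2 : s = 2 := by
      have h2 : 2 ∣ s ^ w := by
        have : Odd (r ^ v) := hrodd.pow
        rw [Nat.odd_iff] at this
        omega
      have h2s : 2 ∣ s := Nat.Prime.dvd_of_dvd_pow Nat.prime_two h2
      exact ((Nat.prime_dvd_prime_iff_eq Nat.prime_two hs).mp h2s).symm
    subst hs2
    rcases Nat.even_or_odd v with hve | hvo
    · -- v even : contradiction
      exfalso
      obtain ⟨k, rfl⟩ := hve
      have hk : 0 < k := by omega
      obtain ⟨t, ht⟩ : Odd (r ^ k) := hrodd.pow
      have hsq : r ^ (k + k) = (r ^ k) * (r ^ k) := by rw [← pow_add]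
      have hmod : r ^ (k + k) % 4 = 1 := by
        rw [hsq, ht]
        have : (2 * t + 1) * (2 * t + 1) = 4 * (t * t + t) + 1 := by ring
        omega
      have hw2 : 2 ≤ w := by
        by_contra hw2
        have hweq : w = 1 := by omega
        subst hweq
        norm_num at h
        have := Nat.one_lt_pow (n := k + k) (by omega) hr.one_lt
        omega
      have h4 : 4 ∣ 2 ^ w := by
        have : (2:ℕ) ^ 2 ∣ 2 ^ w := pow_dvd_pow 2 hw2
        simpa using this
      omega
    · -- v odd : v = 1
      have hv1 : v = 1 := by
        by_contra hv1
        have hv2 : 2 ≤ v := by omega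
        set T : ℤ := ∑ i ∈ range v, (-(r:ℤ)) ^ i with hT
        have hgeom : T * (-(r:ℤ) - 1) = (-(r:ℤ)) ^ v - 1 := geom_sum_mul _ _
        have hneg : (-(r:ℤ)) ^ v = -((r:ℤ) ^ v) := Odd.neg_pow hvo _
        have h' : (r:ℤ) ^ v + 1 = 2 ^ w := by exact_mod_cast h
        have hkey : T * ((r:ℤ) + 1) = 2 ^ w := by nlinarith [hgeom, hneg]
        have hTodd : Odd T := odd_sum_aux _ _ (by
          obtain ⟨t, ht⟩ := hrodd
          exact ⟨-(t+1), by push_cast [ht]; ring⟩) hvo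
        have hTdvd : T.natAbs ∣ 2 ^ w := by
          have hd : T ∣ (2:ℤ) ^ w := ⟨(r:ℤ) + 1, hkey.symm⟩
          have h2 : (T.natAbs : ℤ) ∣ 2 ^ w := (Int.natAbs_dvd).mpr hd
          exact_mod_cast h2
        have hT1 : T.natAbs = 1 := odd_dvd_two_pow_aux (Int.natAbs_odd.mpr hTodd) hTdvd
        have hTpos : 0 < T := by
          by_contra hp
          push_neg at hp
          have h1 : T * ((r:ℤ) + 1) ≤ 0 := mul_nonpos_of_nonpos_of_nonneg hp (by positivity)
          have h2 : (0:ℤ) < 2 ^ w := by positivity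
          omega
        have hTeq : T = 1 := by omega
        have hr1 : (r:ℤ) + 1 = 2 ^ w := by rw [← hkey, hTeq, one_mul]
        have hrv : (r:ℤ) ^ v = (r:ℤ) := by linarith
        have hrvn : r ^ v = r ^ 1 := by rw [pow_one]; exact_mod_cast hrv
        have := Nat.pow_right_injective hr.two_le hrvn
        omega
      refine ⟨rfl, hv1, ?_⟩
      subst hv1
      simp only [pow_one] at h
      omega
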